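/- For any R > 1 and β ≠ 0, and any t ∈ ℝ, the map (z₁,z₂) ↦ (z₁ + t, e^{β(2tz₁ + t²)} z₂) maps the domain G = {(z₁,z₂) : e^{β|z₁|²} < |z₂| < R e^{β|z₁|²}} bijectively onto itself; in particular Aut(G) is noncompact (contains a one-parameter noncompact family). -/

import Mathlib

open Complex Real

lemma key_exp (β t : ℝ) (z : ℂ) :
    Real.exp (β * ‖z + (t : ℂ)‖ ^ 2) =
    ‖Complex.exp ((β : ℂ) * (2 * (t : ℂ) * z + (t : ℂ) ^ 2))‖ *
      Real.exp (β * ‖z‖ ^ 2) := by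
  rw [Complex.norm_exp, ← Real.exp_add]
  congr 1
  rw [Complex.sq_norm, Complex.sq_norm]
  simp [Complex.normSq_apply, Complex.mul_re, Complex.mul_im, Complex.add_re, Complex.add_im, ← Complex.ofReal_pow]
  ring

lemma maps_to (R β t : ℝ) :
    Set.MapsTo
      (fun p : ℂ × ℂ =>
        (p.1 + (t : ℂ), Complex.exp ((β : ℂ) * (2 * (t : ℂ) * p.1 + (t : ℂ) ^ 2)) * p.2))
      {p : ℂ × ℂ | Real.exp (β * ‖p.1‖ ^ 2) < ‖p.2‖ ∧
        ‖p.2‖ < R * Real.exp (β * ‖p.1‖ ^ 2)}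
      {p : ℂ × ℂ | Real.exp (β * ‖p.1‖ ^ 2) < ‖p.2‖ ∧
        ‖p.2‖ < R * Real.exp (β * ‖p.1‖ ^ 2)} := by
  rintro ⟨z₁, z₂⟩ ⟨h1, h2⟩
  have hE : 0 < ‖Complex.exp ((β : ℂ) * (2 * (t : ℂ) * z₁ + (t : ℂ) ^ 2))‖ :=
    norm_pos_iff.mpr (Complex.exp_ne_zero _)
  constructor
  · simp only [norm_mul]
    rw [key_exp]
    exact (mul_lt_mul_iff_right₀ hE).2 h1
  · simp only [norm_mul]
    rw [key_exp]
    calc ‖Complex.exp ((β : ℂ) * (2 * (t : ℂ) * z₁ + (t : ℂ) ^ 2))‖ *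
        ‖z₂‖
        < ‖Complex.exp ((β : ℂ) * (2 * (t : ℂ) * z₁ + (t : ℂ) ^ 2))‖ *
          (R * Real.exp (β * ‖z₁‖ ^ 2)) := (mul_lt_mul_iff_right₀ hE).2 h2
      _ = _ := by ring

theorem stmt_16 (R β : ℝ) (hR : 1 < R) (hβ : β ≠ 0) (t : ℝ) :
    Set.BijOn
      (fun p : ℂ × ℂ =>
        (p.1 + (t : ℂ), Complex.exp ((β : ℂ) * (2 * (t : ℂ) * p.1 + (t : ℂ) ^ 2)) * p.2))
      {p : ℂ × ℂ | Real.exp (β * ‖p.1‖ ^ 2) < ‖p.2‖ ∧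
        ‖p.2‖ < R * Real.exp (β * ‖p.1‖ ^ 2)}
      {p : ℂ × ℂ | Real.exp (β * ‖p.1‖ ^ 2) < ‖p.2‖ ∧
        ‖p.2‖ < R * Real.exp (β * ‖p.1‖ ^ 2)} := by
  have hinv : Set.InvOn
      (fun p : ℂ × ℂ =>
        (p.1 + ((-t : ℝ) : ℂ),
          Complex.exp ((β : ℂ) * (2 * ((-t : ℝ) : ℂ) * p.1 + ((-t : ℝ) : ℂ) ^ 2)) * p.2))
      (fun p : ℂ × ℂ =>
        (p.1 + (t : ℂ), Complex.exp ((β : ℂ) * (2 * (t : ℂ) * p.1 + (t : ℂ) ^ 2)) * p.2))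
      {p : ℂ × ℂ | Real.exp (β * ‖p.1‖ ^ 2) < ‖p.2‖ ∧
        ‖p.2‖ < R * Real.exp (β * ‖p.1‖ ^ 2)}
      {p : ℂ × ℂ | Real.exp (β * ‖p.1‖ ^ 2) < ‖p.2‖ ∧
        ‖p.2‖ < R * Real.exp (β * ‖p.1‖ ^ 2)} := by
    constructor <;>
    · rintro ⟨z₁, z₂⟩ _
      simp only [Complex.ofReal_neg, Prod.mk.injEq]
      constructor
      · ring
      · rw [← mul_assoc, ← Complex.exp_add]
        have : (β : ℂ) * (2 * -(t : ℂ) * (z₁ + (t:ℂ)) + (-(t:ℂ)) ^ 2) +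
            (β : ℂ) * (2 * (t : ℂ) * z₁ + (t : ℂ) ^ 2) = 0 := by ring
        first
        | (rw [this, Complex.exp_zero, one_mul])
        | (have h2 : (β : ℂ) * (2 * (t : ℂ) * (z₁ + -(t:ℂ)) + (t : ℂ) ^ 2) +
              (β : ℂ) * (2 * -(t : ℂ) * z₁ + (-(t:ℂ)) ^ 2) = 0 := by ring
           rw [h2, Complex.exp_zero, one_mul])
  exact hinv.bijOn (maps_to R β t) (by simpa using maps_to R β (-t))
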